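/- Quantitative sectorial lower bound: let φ ∈ (0,π), α ≥ 2, a > 0, and λ ∈ ℂ nonzero with |arg λ| ≤ φ. Then |λ² + α√a λ + a| ≥ sin²(π-φ) · max(|λ|², √a |λ|, a). -/

import Mathlib

/-- Key lemma: `sin φ * max |λ| c ≤ |λ + c|` for `c ≥ 0`, `|arg λ| ≤ φ < π`. -/
lemma sector_linear_lower_bound (φ : ℝ) (hφ1 : 0 < φ) (hφ2 : φ < Real.pi)
    (c : ℝ) (hc : 0 ≤ c) (lam : ℂ) (harg : |lam.arg| ≤ φ) :
    Real.sin φ * max ‖lam‖ c ≤ ‖lam + c‖ := by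
  have hsin : 0 ≤ Real.sin φ := Real.sin_nonneg_of_nonneg_of_le_pi hφ1.le hφ2.le
  have hsin1 : Real.sin φ ≤ 1 := Real.sin_le_one φ
  by_cases h0 : lam = 0
  · simp [h0, Complex.norm_real, Real.norm_eq_abs, abs_of_nonneg hc, max_eq_right hc]
    nlinarith [mul_le_mul_of_nonneg_right hsin1 hc]
  set R := ‖lam‖ with hR
  have hRpos : 0 < R := by simpa [hR] using (norm_pos_iff.mpr h0)
  have hre : lam.re = R * Real.cos lam.arg := by
    rw [hR, Complex.cos_arg h0]
    field_simp
  have hcos : Real.cos φ ≤ Real.cos lam.arg := by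
    rw [← Real.cos_abs lam.arg]
    exact Real.cos_le_cos_of_nonneg_of_le_pi (abs_nonneg _) hφ2.le harg
  have hx : R * Real.cos φ ≤ lam.re := by
    rw [hre]; exact mul_le_mul_of_nonneg_left hcos hRpos.le
  have hsq : R ^ 2 = lam.re ^ 2 + lam.im ^ 2 := by
    rw [hR, Complex.sq_norm, Complex.normSq_apply]; ring
  have habs2 : ‖lam + c‖ ^ 2 = (lam.re + c) ^ 2 + lam.im ^ 2 := by
    rw [Complex.sq_norm, Complex.normSq_apply]; simp; ring
  have hpyth : Real.sin φ ^ 2 + Real.cos φ ^ 2 = 1 := Real.sin_sq_add_cos_sq φ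
  have hkey : (Real.sin φ * max R c) ^ 2 ≤ ‖lam + c‖ ^ 2 := by
    rw [habs2]
    have hstep : R ^ 2 + 2 * (c * (R * Real.cos φ)) + c ^ 2
        ≤ (lam.re + c) ^ 2 + lam.im ^ 2 := by
      nlinarith [mul_le_mul_of_nonneg_left hx hc, hsq]
    rcases le_total R c with h | h
    · rw [max_eq_right h]
      have ht2 : (Real.sin φ * c) ^ 2 = c ^ 2 - (Real.cos φ * c) ^ 2 := by
        linear_combination c ^ 2 * hpyth
      nlinarith [sq_nonneg (R + Real.cos φ * c), ht2, hstep]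
    · rw [max_eq_left h]
      have ht3 : (Real.sin φ * R) ^ 2 = R ^ 2 - (Real.cos φ * R) ^ 2 := by
        linear_combination R ^ 2 * hpyth
      nlinarith [sq_nonneg (Real.cos φ * R + c), ht3, hstep]
  have h1 : 0 ≤ Real.sin φ * max R c := mul_nonneg hsin (le_trans hRpos.le (le_max_left _ _))
  nlinarith [norm_nonneg (lam + c), hkey, h1]

/-- Quantitative sectorial lower bound: for `φ ∈ (0,π)`, `α ≥ 2`, `a > 0` and
nonzero `λ` with `|arg λ| ≤ φ`, one has
`|λ² + α√a λ + a| ≥ sin²(π-φ) · max(|λ|², √a |λ|, a)`. -/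
theorem quadratic_sector_lower_bound
    (φ α a : ℝ) (hφ : φ ∈ Set.Ioo (0 : ℝ) Real.pi) (hα : 2 ≤ α) (ha : 0 < a)
    (lam : ℂ) (hlam : lam ≠ 0) (harg : |lam.arg| ≤ φ) :
    Real.sin (Real.pi - φ) ^ 2
        * max (max (‖lam‖ ^ 2) (Real.sqrt a * ‖lam‖)) a
      ≤ ‖lam ^ 2 + (α * Real.sqrt a : ℝ) * lam + (a : ℂ)‖ := by
  obtain ⟨hφ1, hφ2⟩ := hφ
  set s := Real.sqrt a with hs
  have hspos : 0 < s := Real.sqrt_pos.mpr ha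
  have hs2 : s * s = a := Real.mul_self_sqrt ha.le
  set d := Real.sqrt (α ^ 2 - 4) with hd
  have hd0 : 0 ≤ d := Real.sqrt_nonneg _
  have hd2 : d * d = α ^ 2 - 4 := Real.mul_self_sqrt (by nlinarith)
  set r1 := (α + d) / 2 with hr1
  set r2 := (α - d) / 2 with hr2
  have hsum : r1 + r2 = α := by rw [hr1, hr2]; ring
  have hprod : r1 * r2 = 1 := by rw [hr1, hr2]; nlinarith [hd2]
  have hr1ge : 1 ≤ r1 := by rw [hr1]; nlinarith [hd0]
  have hr2pos : 0 < r2 := by nlinarith [hprod, hr1ge]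
  have hr2le : r2 ≤ 1 := by nlinarith [hprod, hr1ge, hr2pos]
  have hc1 : (0:ℝ) ≤ r1 * s := by positivity
  have hc2 : (0:ℝ) ≤ r2 * s := by positivity
  have hra : (r1 * s) * (r2 * s) = a := by
    calc (r1 * s) * (r2 * s) = (r1 * r2) * (s * s) := by ring
      _ = a := by rw [hprod, hs2]; ring
  -- factorization
  have hfac : lam ^ 2 + (α * s : ℝ) * lam + (a : ℂ)
      = (lam + (r1 * s : ℝ)) * (lam + (r2 * s : ℝ)) := by
    have hr : r1 * s + r2 * s = α * s := by rw [← hsum]; ring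
    have h1 : ((r1 * s : ℝ) : ℂ) + ((r2 * s : ℝ) : ℂ) = ((α * s : ℝ) : ℂ) := by
      rw [← Complex.ofReal_add, hr]
    have h2 : ((r1 * s : ℝ) : ℂ) * ((r2 * s : ℝ) : ℂ) = (a : ℂ) := by
      rw [← Complex.ofReal_mul, hra]
    linear_combination -lam * h1 - h2
  rw [hfac, norm_mul]
  set R := ‖lam‖ with hR
  have hRpos : 0 < R := norm_pos_iff.mpr hlam
  have k1 := sector_linear_lower_bound φ hφ1 hφ2 (r1 * s) hc1 lam harg
  have k2 := sector_linear_lower_bound φ hφ1 hφ2 (r2 * s) hc2 lam harg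
  have hsin : 0 ≤ Real.sin φ := Real.sin_nonneg_of_nonneg_of_le_pi hφ1.le hφ2.le
  have hmul : (Real.sin φ * max R (r1 * s)) * (Real.sin φ * max R (r2 * s))
      ≤ ‖lam + (r1*s:ℝ)‖ * ‖lam + (r2*s:ℝ)‖ := by
    apply mul_le_mul k1 k2 (by positivity) (norm_nonneg _)
  rw [Real.sin_pi_sub]
  refine le_trans ?_ hmul
  have hmaxle : max (max (R ^ 2) (s * R)) a ≤ max R (r1 * s) * max R (r2 * s) := by
    apply max_le
    apply max_le
    · calc R ^ 2 = R * R := sq R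
        _ ≤ max R (r1 * s) * max R (r2 * s) :=
          mul_le_mul (le_max_left _ _) (le_max_left _ _) hRpos.le
            (le_trans hRpos.le (le_max_left _ _))
    · rcases le_total R (r2 * s) with h | h
      · calc s * R ≤ (r1 * s) * (r2 * s) := by
              calc s * R ≤ s * (r2 * s) := mul_le_mul_of_nonneg_left h hspos.le
                _ = (1 * s) * (r2 * s) := by ring
                _ ≤ (r1 * s) * (r2 * s) := mul_le_mul_of_nonneg_right
                    (mul_le_mul_of_nonneg_right hr1ge hspos.le) hc2
          _ ≤ max R (r1 * s) * max R (r2 * s) :=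
            mul_le_mul (le_max_right _ _) (le_max_right _ _) hc2
              (le_trans hc1 (le_max_right _ _))
      · calc s * R ≤ (r1 * s) * R := by
              calc s * R = (1 * s) * R := by ring
                _ ≤ (r1 * s) * R := mul_le_mul_of_nonneg_right
                    (mul_le_mul_of_nonneg_right hr1ge hspos.le) hRpos.le
          _ ≤ max R (r1 * s) * max R (r2 * s) :=
            mul_le_mul (le_max_right _ _) (le_max_left _ _) hRpos.le
              (le_trans hc1 (le_max_right _ _))
    · calc a = (r1 * s) * (r2 * s) := hra.symm
        _ ≤ max R (r1 * s) * max R (r2 * s) :=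
          mul_le_mul (le_max_right _ _) (le_max_right _ _) hc2
            (le_trans hc1 (le_max_right _ _))
  calc Real.sin φ ^ 2 * max (max (R ^ 2) (s * R)) a
      ≤ Real.sin φ ^ 2 * (max R (r1 * s) * max R (r2 * s)) := by
        apply mul_le_mul_of_nonneg_left hmaxle (by positivity)
    _ = (Real.sin φ * max R (r1 * s)) * (Real.sin φ * max R (r2 * s)) := by ring
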